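/- arXiv:2512.11619 — 8 statements merged into one kernel-verified Lean document; each statement's English description precedes it below -/
import Mathlib

section
/- Let M be a real d×d' matrix whose columns all have the same Euclidean norm and whose convex hull 𝓜 contains the origin in its interior. If b̃ lies on the boundary of 𝓜, then the minimum of ‖t‖₁ over nonnegative t with M t = b̃ equals 1. -/
/-- If all columns of M have the same Euclidean norm and the convex hull 𝓜 of the columns
contains the origin in its interior, then for any point b̃ on the boundary of 𝓜 the
minimum of ‖t‖₁ over nonnegative t with M t = b̃ equals 1. -/
theorem stmt_1 (d d' : ℕ) (M : Matrix (Fin d) (Fin d') ℝ)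
    (hnorm : ∀ j j' : Fin d', Real.sqrt (∑ i, (M i j) ^ 2) = Real.sqrt (∑ i, (M i j') ^ 2))
    (hint : (0 : Fin d → ℝ) ∈ interior (convexHull ℝ (Set.range fun j => fun i => M i j)))
    (b : Fin d → ℝ)
    (hb : b ∈ frontier (convexHull ℝ (Set.range fun j => fun i => M i j))) :
    IsLeast {x : ℝ | ∃ t : Fin d' → ℝ,
      (∀ j, 0 ≤ t j) ∧ M.mulVec t = b ∧ x = ∑ j, |t j|} 1 := by
  set g : Fin d' → (Fin d → ℝ) := fun j => fun i => M i j with hg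
  set K := convexHull ℝ (Set.range g) with hK
  have hKclosed : IsClosed K := (Set.finite_range g).isClosed_convexHull (𝕜 := ℝ)
  have hKconv : Convex ℝ K := convex_convexHull ℝ _
  have hbK : b ∈ K := by
    have := hb.1
    rwa [hKclosed.closure_eq] at this
  have hbni : b ∉ interior K := hb.2
  constructor
  · -- 1 is in the set
    have hbK' : b ∈ convexHull ℝ (Set.range g) := hbK
    rw [convexHull_range_eq_exists_affineCombination] at hbK'
    obtain ⟨s, w, hw0, hw1, hwb⟩ := hbK'
    refine ⟨fun j => if j ∈ s then w j else 0, fun j => ?_, ?_, ?_⟩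
    · dsimp only
      split
      · exact hw0 _ (by assumption)
      · exact le_rfl
    · have hlin := Finset.affineCombination_eq_linear_combination s g w hw1
      rw [hlin] at hwb
      funext i
      simp only [Matrix.mulVec, dotProduct]
      have : ∑ j, M i j * (if j ∈ s then w j else 0) = ∑ j ∈ s, M i j * w j := by
        rw [← Finset.sum_subset (Finset.subset_univ s) (by intro j _ hj; simp [hj])]
        exact Finset.sum_congr rfl fun j hj => by rw [if_pos hj]
      rw [this]
      have := congrFun hwb i
      simp only [Finset.sum_apply, Pi.smul_apply, smul_eq_mul, hg] at this
      rw [← this]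
      exact Finset.sum_congr rfl fun j _ => mul_comm _ _
    · rw [← hw1]
      rw [← Finset.sum_subset (Finset.subset_univ s)
        (by intro j _ hj; simp [hj])]
      refine Finset.sum_congr rfl fun j hj => ?_
      simp [hj, abs_of_nonneg (hw0 j hj)]
  · -- lower bound
    rintro x ⟨t, ht0, htb, rfl⟩
    by_contra hlt
    push_neg at hlt
    have habs : ∀ j, |t j| = t j := fun j => abs_of_nonneg (ht0 j)
    simp only [habs] at hlt ⊢
    set s := ∑ j, t j with hs
    have hs0 : 0 ≤ s := Finset.sum_nonneg fun j _ => ht0 j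
    rcases eq_or_lt_of_le hs0 with h0 | hpos
    · -- all t j = 0, so b = 0 ∈ interior, contradiction
      have ht : ∀ j ∈ Finset.univ, t j = 0 := fun j _ =>
        (Finset.sum_eq_zero_iff_of_nonneg fun j _ => ht0 j).mp h0.symm j (Finset.mem_univ j)
      have : b = 0 := by
        rw [← htb]
        funext i
        simp only [Matrix.mulVec, dotProduct]
        exact Finset.sum_eq_zero fun j hj => by rw [ht j hj, mul_zero]
      exact hbni (this ▸ hint)
    · -- 0 < s < 1
      have hyK : s⁻¹ • b ∈ K := by
        have : s⁻¹ • b = Finset.univ.centerMass t g := by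
          rw [Finset.centerMass, ← hs]
          funext i
          simp only [Pi.smul_apply, smul_eq_mul, Finset.sum_apply]
          rw [← htb]
          simp only [Matrix.mulVec, dotProduct]
          congr 1
          exact Finset.sum_congr rfl fun j _ => mul_comm _ _
        rw [this]
        exact Finset.univ.centerMass_mem_convexHull (fun j _ => ht0 j) hpos
          (fun j _ => Set.mem_range_self j)
      have hmem : (1 - s) • (0 : Fin d → ℝ) + s • (s⁻¹ • b) ∈ interior K :=
        hKconv.combo_interior_self_mem_interior hint hyK (by linarith) hs0 (by ring)
      have heq : (1 - s) • (0 : Fin d → ℝ) + s • (s⁻¹ • b) = b := by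
        rw [smul_zero, zero_add, smul_smul, mul_inv_cancel₀ (ne_of_gt hpos), one_smul]
      exact hbni (heq ▸ hmem)
end

section
/- Let M be a real d×d' matrix whose convex hull of columns 𝓜 contains the origin in its interior, and suppose that every boundary point b̃ of 𝓜 satisfies ‖b̃‖₂ ≥ r > 0. Then for any b ∈ ℝ^d, there exists a nonnegative t with M t = b and ‖t‖₁ ≤ ‖b‖₂ / r. -/
/-- If the convex hull 𝓜 of the columns of M contains 0 in its interior, and every boundary
point of 𝓜 has Euclidean norm at least r > 0, then any b ∈ ℝ^d can be written M t = b with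
t ≥ 0 and ‖t‖₁ ≤ ‖b‖₂ / r. -/
theorem stmt_2 (d d' : ℕ) (M : Matrix (Fin d) (Fin d') ℝ) (r : ℝ) (hr : 0 < r)
    (hint : (0 : Fin d → ℝ) ∈ interior (convexHull ℝ (Set.range fun j => fun i => M i j)))
    (hbd : ∀ p ∈ frontier (convexHull ℝ (Set.range fun j => fun i => M i j)),
      r ≤ Real.sqrt (∑ i, (p i) ^ 2))
    (b : Fin d → ℝ) :
    ∃ t : Fin d' → ℝ, (∀ j, 0 ≤ t j) ∧ M.mulVec t = b ∧
      (∑ j, |t j|) ≤ Real.sqrt (∑ i, (b i) ^ 2) / r := by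
  classical
  set g : Fin d' → (Fin d → ℝ) := fun j => fun i => M i j with hg
  set K : Set (Fin d → ℝ) := convexHull ℝ (Set.range g) with hK
  have hconv : Convex ℝ K := convex_convexHull ℝ _
  have hclosed : IsClosed K := (Set.finite_range g).isClosed_convexHull ℝ
  have hnhds : K ∈ nhds (0 : Fin d → ℝ) := mem_interior_iff_mem_nhds.mp hint
  have hnorm_smul : ∀ (c : ℝ) (x : Fin d → ℝ),
      Real.sqrt (∑ i, (c • x) i ^ 2) = |c| * Real.sqrt (∑ i, x i ^ 2) := by
    intro c x
    have h : ∑ i, (c • x) i ^ 2 = c ^ 2 * ∑ i, x i ^ 2 := by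
      simp [Finset.mul_sum, mul_pow]
    rw [h, Real.sqrt_mul (sq_nonneg c), Real.sqrt_sq_eq_abs]
  have hball : ∀ x : Fin d → ℝ, Real.sqrt (∑ i, x i ^ 2) ≤ r → x ∈ K := by
    intro x hx
    by_cases h1 : gauge K x ≤ 1
    · rw [← hclosed.closure_eq]
      exact (gauge_le_one_iff_mem_closure hconv hnhds).mp h1
    · push_neg at h1
      exfalso
      have ha : 0 < gauge K x := lt_trans one_pos h1
      set a := gauge K x with haa
      have hy : gauge K (a⁻¹ • x) = 1 := by
        rw [gauge_smul_of_nonneg (inv_nonneg.mpr ha.le), smul_eq_mul, ← haa,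
          inv_mul_cancel₀ ha.ne']
      have hfr : a⁻¹ • x ∈ frontier K := (gauge_eq_one_iff_mem_frontier hconv hnhds).mp hy
      have hrle := hbd _ hfr
      rw [hnorm_smul] at hrle
      have h2 : |a⁻¹| * Real.sqrt (∑ i, x i ^ 2) ≤ a⁻¹ * r := by
        rw [abs_of_pos (inv_pos.mpr ha)]
        exact mul_le_mul_of_nonneg_left hx (inv_nonneg.mpr ha.le)
      have h3 : a⁻¹ * r < r := by
        have hlt : a⁻¹ < 1 := inv_lt_one_of_one_lt₀ h1
        nlinarith
      linarith
  by_cases hb : b = 0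
  · refine ⟨0, fun j => le_refl 0, by simp [hb], ?_⟩
    have : Real.sqrt (∑ i, (b i) ^ 2) / r = 0 := by simp [hb]
    simp [hb]
  · set nb := Real.sqrt (∑ i, b i ^ 2) with hnb
    have hnb_pos : 0 < nb := by
      apply Real.sqrt_pos.mpr
      have hex : ∃ i, b i ≠ 0 := by
        by_contra h; push_neg at h; exact hb (funext h)
      obtain ⟨i, hi⟩ := hex
      exact Finset.sum_pos' (fun i _ => sq_nonneg _)
        ⟨i, Finset.mem_univ i, by positivity⟩
    set x : Fin d → ℝ := (r / nb) • b with hx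
    have hxnorm : Real.sqrt (∑ i, x i ^ 2) = r := by
      rw [hx, hnorm_smul, abs_of_pos (div_pos hr hnb_pos), ← hnb,
        div_mul_cancel₀ _ hnb_pos.ne']
    have hxK : x ∈ K := hball x (le_of_eq hxnorm)
    rw [hK, convexHull_range_eq_exists_affineCombination] at hxK
    obtain ⟨s, w, hw0, hw1, hwx⟩ := hxK
    rw [Finset.affineCombination_eq_linear_combination s g w hw1] at hwx
    set w' : Fin d' → ℝ := fun j => if j ∈ s then w j else 0 with hw'
    have hw'0 : ∀ j, 0 ≤ w' j := fun j => by
      by_cases h : j ∈ s <;> simp [hw', h, hw0 j]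
    have hw'1 : ∑ j, w' j = 1 := by
      rw [← hw1]
      rw [Finset.sum_ite_mem, Finset.univ_inter]
    have hw'x : ∑ j, w' j • g j = x := by
      rw [← hwx]
      rw [show (∑ j, w' j • g j) = ∑ j ∈ Finset.univ, (if j ∈ s then w j • g j else 0) by
        apply Finset.sum_congr rfl; intro j _; by_cases h : j ∈ s <;> simp [hw', h]]
      rw [Finset.sum_ite_mem, Finset.univ_inter]
    refine ⟨fun j => (nb / r) * w' j, ?_, ?_, ?_⟩
    · intro j
      exact mul_nonneg (div_nonneg hnb_pos.le hr.le) (hw'0 j)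
    · funext i
      have happ : ∑ j, w' j * M i j = (r / nb) * b i := by
        have := congrFun hw'x i
        simpa [Finset.sum_apply, hg, hx] using this
      have : M.mulVec (fun j => (nb / r) * w' j) i
          = (nb / r) * ∑ j, w' j * M i j := by
        simp [Matrix.mulVec, dotProduct, Finset.mul_sum]
        ring_nf
        apply Finset.sum_congr rfl
        intros; ring
      rw [this, happ]
      field_simp
    · have : ∑ j, |(nb / r) * w' j| = nb / r := by
        have h1 : ∀ j, |(nb / r) * w' j| = (nb / r) * w' j := fun j =>
          abs_of_nonneg (mul_nonneg (div_nonneg hnb_pos.le hr.le) (hw'0 j))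
        simp only [h1, ← Finset.mul_sum, hw'1, mul_one]
      rw [this, hnb]
end

section
/- Let M be the 3×4 matrix with columns (1,1,1), (1,−1,−1), (−1,1,−1), (−1,−1,1), and let b = (−1,−1,−1). Then the minimum of ‖t‖₁ over nonnegative t ∈ ℝ⁴ with M t = b equals 3 = √3 · ‖b‖₂. -/
/-- For the 3×4 sign matrix with columns (1,1,1), (1,−1,−1), (−1,1,−1), (−1,−1,1) and
b = (−1,−1,−1), the minimum of ‖t‖₁ over nonnegative t with M t = b equals 3 = √3·‖b‖₂. -/
theorem stmt_6 :
    let M : Matrix (Fin 3) (Fin 4) ℝ :=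
      Matrix.of ![![1, 1, -1, -1], ![1, -1, 1, -1], ![1, -1, -1, 1]]
    let b : Fin 3 → ℝ := ![-1, -1, -1]
    IsLeast {x : ℝ | ∃ t : Fin 4 → ℝ,
        (∀ j, 0 ≤ t j) ∧ M.mulVec t = b ∧ x = ∑ j, |t j|} 3 ∧
    (3 : ℝ) = Real.sqrt 3 * Real.sqrt (∑ i, (b i) ^ 2) := by
  intro M b
  refine ⟨⟨⟨![0, 1, 1, 1], ?_, ?_, ?_⟩, ?_⟩, ?_⟩
  · intro j; fin_cases j <;> norm_num
  · funext i; fin_cases i <;>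
      simp [M, b, Matrix.mulVec, dotProduct, Fin.sum_univ_four] <;> norm_num
  · simp [Fin.sum_univ_four]; norm_num
  · rintro x ⟨t, hpos, heq, rfl⟩
    have h0 := congrFun heq 0
    have h1 := congrFun heq 1
    have h2 := congrFun heq 2
    simp [M, b, Matrix.mulVec, dotProduct, Fin.sum_univ_four] at h0 h1 h2
    have e : ∀ j, |t j| = t j := fun j => abs_of_nonneg (hpos j)
    simp only [Fin.sum_univ_four, e]
    have := hpos 0; have := hpos 1; have := hpos 2; have := hpos 3
    linarith
  · have : (∑ i, (b i) ^ 2) = 3 := by simp [b, Fin.sum_univ_three]; norm_num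
    rw [this, ← Real.sqrt_mul_self (by norm_num : (0:ℝ) ≤ 3)]
    norm_num
end

section
/- Let M be the 3×4 matrix with columns (1,1,1), (1,−1,−1), (−1,1,−1), (−1,−1,1). Then for every b ∈ ℝ³ there exists a nonnegative t ∈ ℝ⁴ with M t = b and ‖t‖₁ ≤ √3 ‖b‖₂, and this constant √3 cannot be improved. -/
private lemma aux3 (x y z : ℝ) :
    x + y + z ≤ Real.sqrt 3 * Real.sqrt (x ^ 2 + y ^ 2 + z ^ 2) := by
  have h : (x + y + z) ^ 2 ≤ 3 * (x ^ 2 + y ^ 2 + z ^ 2) := by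
    nlinarith [sq_nonneg (x - y), sq_nonneg (y - z), sq_nonneg (x - z)]
  calc x + y + z ≤ |x + y + z| := le_abs_self _
    _ = Real.sqrt ((x + y + z) ^ 2) := (Real.sqrt_sq_eq_abs _).symm
    _ ≤ Real.sqrt (3 * (x ^ 2 + y ^ 2 + z ^ 2)) := Real.sqrt_le_sqrt h
    _ = Real.sqrt 3 * Real.sqrt (x ^ 2 + y ^ 2 + z ^ 2) :=
        Real.sqrt_mul (by norm_num) _

/-- For the 3-qubit ZZ sign matrix M (columns (1,1,1), (1,−1,−1), (−1,1,−1), (−1,−1,1)),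
every b ∈ ℝ³ admits a nonnegative t with M t = b and ‖t‖₁ ≤ √3 ‖b‖₂, and the constant √3
cannot be improved. -/
theorem stmt_7 :
    let M : Matrix (Fin 3) (Fin 4) ℝ :=
      Matrix.of ![![1, 1, -1, -1], ![1, -1, 1, -1], ![1, -1, -1, 1]]
    (∀ b : Fin 3 → ℝ, ∃ t : Fin 4 → ℝ, (∀ j, 0 ≤ t j) ∧ M.mulVec t = b ∧
        (∑ j, |t j|) ≤ Real.sqrt 3 * Real.sqrt (∑ i, (b i) ^ 2)) ∧
    (∀ c : ℝ, (∀ b : Fin 3 → ℝ, ∃ t : Fin 4 → ℝ, (∀ j, 0 ≤ t j) ∧ M.mulVec t = b ∧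
        (∑ j, |t j|) ≤ c * Real.sqrt (∑ i, (b i) ^ 2)) → Real.sqrt 3 ≤ c) := by
  intro M
  constructor
  · intro b
    set b0 := b 0 with hb0
    set b1 := b 1 with hb1
    set b2 := b 2 with hb2
    set s := b0 + b1 + b2 with hs
    set R := Real.sqrt 3 * Real.sqrt (b0 ^ 2 + b1 ^ 2 + b2 ^ 2) with hRdef
    have hA : -b0 + -b1 + -b2 ≤ R := by
      have := aux3 (-b0) (-b1) (-b2); simpa [neg_sq] using this
    have hB : -b0 + b1 + b2 ≤ R := by
      have := aux3 (-b0) b1 b2; simpa [neg_sq] using this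
    have hC : b0 + -b1 + b2 ≤ R := by
      have := aux3 b0 (-b1) b2; simpa [neg_sq] using this
    have hD : b0 + b1 + -b2 ≤ R := by
      have := aux3 b0 b1 (-b2); simpa [neg_sq] using this
    set m := max (max 0 ((s - b0) / 2)) (max ((s - b1) / 2) ((s - b2) / 2)) with hm
    have hm0 : (0 : ℝ) ≤ m := le_trans (le_max_left _ _) (le_max_left _ _)
    have hm1 : (s - b0) / 2 ≤ m := le_trans (le_max_right _ _) (le_max_left _ _)
    have hm2 : (s - b1) / 2 ≤ m := le_trans (le_max_left _ _) (le_max_right _ _)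
    have hm3 : (s - b2) / 2 ≤ m := le_trans (le_max_right _ _) (le_max_right _ _)
    have hmle : m ≤ (s + R) / 4 := by
      apply max_le <;> apply max_le <;> linarith
    refine ⟨![m, m - (s - b0) / 2, m - (s - b1) / 2, m - (s - b2) / 2], ?_, ?_, ?_⟩
    · intro j
      fin_cases j <;> simp <;> linarith
    · funext i
      fin_cases i <;>
        simp [M, Matrix.mulVec, dotProduct, Fin.sum_univ_four, hs] <;> ring
    · have hsum : (∑ i, (b i) ^ 2) = b0 ^ 2 + b1 ^ 2 + b2 ^ 2 := by
        simp [Fin.sum_univ_three, hb0, hb1, hb2]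
      rw [hsum]
      rw [Fin.sum_univ_four]
      simp only [Matrix.cons_val_zero, Matrix.cons_val_one, Matrix.head_cons,
        Matrix.cons_val_two, Matrix.tail_cons, Matrix.cons_val_three]
      rw [abs_of_nonneg hm0, abs_of_nonneg (by linarith : (0:ℝ) ≤ m - (s - b0) / 2),
        abs_of_nonneg (by linarith : (0:ℝ) ≤ m - (s - b1) / 2),
        abs_of_nonneg (by linarith : (0:ℝ) ≤ m - (s - b2) / 2)]
      show m + (m - (s - b0) / 2) + (m - (s - b1) / 2) + (m - (s - b2) / 2) ≤ R
      linarith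
  · intro c hc
    obtain ⟨t, ht, hMt, hsum⟩ := hc ![1, 1, -1]
    have e0 := congrFun hMt 0
    have e1 := congrFun hMt 1
    have e2 := congrFun hMt 2
    simp [M, Matrix.mulVec, dotProduct, Fin.sum_univ_four] at e0 e1 e2
    have h3 : (3 : ℝ) ≤ ∑ j, |t j| := by
      rw [Fin.sum_univ_four, abs_of_nonneg (ht 0), abs_of_nonneg (ht 1),
        abs_of_nonneg (ht 2), abs_of_nonneg (ht 3)]
      have := ht 3
      linarith
    have hs3 : (∑ i, ((![1, 1, -1] : Fin 3 → ℝ) i) ^ 2) = 3 := by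
      simp [Fin.sum_univ_three]; norm_num
    rw [hs3] at hsum
    have hcs := le_trans h3 hsum
    have hsq : Real.sqrt 3 * Real.sqrt 3 = 3 :=
      Real.mul_self_sqrt (by norm_num)
    have hpos : (0 : ℝ) < Real.sqrt 3 := Real.sqrt_pos.mpr (by norm_num)
    nlinarith
end

section
/- For n qubits, let M(n) be the n(n−1)/2 × 2^{n−1} matrix whose columns are indexed by sign vectors s ∈ {±1}ⁿ with s₁ = 1 and whose entry in row (i,j) (i<j) is sᵢ sⱼ. Then the columns of M(n) span ℝ^{n(n−1)/2} for all n ≥ 2. -/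
/-- The columns of the n-qubit ZZ DAQC sign matrix M(n) — indexed by sign vectors
s ∈ {±1}ⁿ with s₁ = 1, with entry sᵢsⱼ in row (i,j), i < j — span ℝ^{n(n−1)/2}
(here realized as the functions on the set of ordered pairs). -/
theorem stmt_8 (n : ℕ) (hn : 2 ≤ n) :
    Submodule.span ℝ
      {c : {p : Fin n × Fin n // p.1 < p.2} → ℝ |
        ∃ s : Fin n → Bool, s ⟨0, by omega⟩ = true ∧
          c = fun p => (if s p.1.1 then (1 : ℝ) else -1) *
                        (if s p.1.2 then (1 : ℝ) else -1)} = ⊤ := by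
  classical
  set ι := {p : Fin n × Fin n // p.1 < p.2}
  set S : Set (ι → ℝ) :=
      {c : ι → ℝ |
        ∃ s : Fin n → Bool, s ⟨0, by omega⟩ = true ∧
          c = fun p => (if s p.1.1 then (1 : ℝ) else -1) *
                        (if s p.1.2 then (1 : ℝ) else -1)} with hS
  set z : Fin n := ⟨0, by omega⟩ with hz
  -- any ±1-valued column is in the span
  have hmem : ∀ g : Fin n → ℝ, (∀ x, g x = 1 ∨ g x = -1) →
      (fun p : ι => g p.1.1 * g p.1.2) ∈ Submodule.span ℝ S := by
    intro g hg
    apply Submodule.subset_span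
    refine ⟨fun x => decide (g x = g z), by simp [hz], ?_⟩
    funext p
    have key : ∀ x : Fin n,
        (if (decide (g x = g z) : Bool) then (1:ℝ) else -1) = g z * g x := by
      intro x
      rcases hg x with hx | hx <;> rcases hg z with hzv | hzv <;>
        simp [hx, hzv] <;> norm_num
    rw [key, key]
    rcases hg z with hzv | hzv <;> rw [hzv] <;> ring
  rw [eq_top_iff, ← (Pi.basisFun ℝ ι).span_eq, Submodule.span_le]
  rintro _ ⟨p, rfl⟩
  obtain ⟨⟨i, j⟩, hij⟩ := p
  -- sign functions for flipping i, j
  set gi : Fin n → ℝ := fun x => if x = i then -1 else 1 with hgi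
  set gj : Fin n → ℝ := fun x => if x = j then -1 else 1 with hgj
  have pgi : ∀ x, gi x = 1 ∨ gi x = -1 := by
    intro x; by_cases h : x = i <;> simp [hgi, h]
  have pgj : ∀ x, gj x = 1 ∨ gj x = -1 := by
    intro x; by_cases h : x = j <;> simp [hgj, h]
  have pgij : ∀ x, gi x * gj x = 1 ∨ gi x * gj x = -1 := by
    intro x; rcases pgi x with h | h <;> rcases pgj x with h' | h' <;>
      rw [h, h'] <;> norm_num
  have key : (Pi.basisFun ℝ ι ⟨(i, j), hij⟩ : ι → ℝ) =
      (1/4 : ℝ) • (fun p : ι => (1:ℝ) * 1)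
      - (1/4 : ℝ) • (fun p : ι => gi p.1.1 * gi p.1.2)
      - (1/4 : ℝ) • (fun p : ι => gj p.1.1 * gj p.1.2)
      + (1/4 : ℝ) • (fun p : ι => (gi p.1.1 * gj p.1.1) * (gi p.1.2 * gj p.1.2)) := by
    funext q
    obtain ⟨⟨a, b⟩, hab⟩ := q
    have hij' : i ≠ j := ne_of_lt hij
    simp only [Pi.basisFun_apply, Pi.single_apply, Pi.smul_apply, Pi.add_apply,
      Pi.sub_apply, smul_eq_mul, Subtype.mk.injEq, Prod.mk.injEq, hgi, hgj]
    have hab' : a < b := hab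
    have hij2 : i < j := hij
    clear hmem pgi pgj pgij hS hz hij'
    have hiff : ((⟨(a, b), hab⟩ : ι) = ⟨(i, j), hij⟩) = (a = i ∧ b = j) := by
      simp [Subtype.ext_iff, Prod.ext_iff]
    simp only [hiff]
    split_ifs <;> (try norm_num) <;> omega
  rw [key]
  refine Submodule.add_mem _ (Submodule.sub_mem _ (Submodule.sub_mem _
    (Submodule.smul_mem _ _ ?_) (Submodule.smul_mem _ _ ?_))
    (Submodule.smul_mem _ _ ?_)) (Submodule.smul_mem _ _ ?_)
  · have := hmem (fun _ => 1) (fun _ => Or.inl rfl)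
    simpa using this
  · exact hmem gi pgi
  · exact hmem gj pgj
  · exact hmem (fun x => gi x * gj x) pgij
end

section
/- For n qubits, let M(n) be the ZZ sign matrix with columns (sᵢsⱼ)_{i<j} for s ∈ {±1}ⁿ with s₁=1. Then the origin of ℝ^{n(n−1)/2} lies in the interior of the convex hull of the columns of M(n), for all n ≥ 3. -/
namespace Stmt9Aux

def e (b : Bool) : ℝ := if b then 1 else -1

lemma e_not (b : Bool) : e (!b) = - e b := by cases b <;> simp [e]
lemma e_mul_self (b : Bool) : e b * e b = 1 := by cases b <;> norm_num [e]
lemma e_abs (b : Bool) : |e b| = 1 := by cases b <;> norm_num [e]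

variable {n : ℕ}

/-- columns of the sign matrix -/
def col (s : Fin n → Bool) : {p : Fin n × Fin n // p.1 < p.2} → ℝ :=
  fun p => e (s p.1.1) * e (s p.1.2)

def T (i0 : Fin n) : Finset (Fin n → Bool) :=
  Finset.univ.filter (fun s => s i0 = true)

lemma flip_sum (i0 m : Fin n) (hm : m ≠ i0) (f : (Fin n → Bool) → ℝ)
    (hf : ∀ s, f (Function.update s m (!s m)) = - f s) :
    ∑ s ∈ T i0, f s = 0 := by
  apply Finset.sum_involution (fun s _ => Function.update s m (!s m))
  · intro s _
    rw [hf]; ring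
  · intro s _ _ h
    have := congrFun h m
    simp at this
  · intro s _
    funext r
    by_cases hr : r = m
    · subst hr; simp
    · simp [Function.update_of_ne hr]
  · intro s hs
    simp only [T, Finset.mem_filter, Finset.mem_univ, true_and] at hs ⊢
    rwa [Function.update_of_ne (Ne.symm hm)]

lemma sum_col (i0 : Fin n) (hi0 : (i0 : ℕ) = 0) (p : {p : Fin n × Fin n // p.1 < p.2}) :
    ∑ s ∈ T i0, col s p = 0 := by
  apply flip_sum i0 p.1.2
  · intro h
    have h1 : (p.1.2 : ℕ) = 0 := by rw [h, hi0]
    have h2 : ((p : Fin n × Fin n).1 : ℕ) < ((p : Fin n × Fin n).2 : ℕ) := p.2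
    omega
  · intro s
    unfold col
    rw [Function.update_of_ne (Fin.ne_of_lt p.2), Function.update_self, e_not]
    ring

lemma sum_col_mul (i0 : Fin n) (hi0 : (i0 : ℕ) = 0)
    (p q : {p : Fin n × Fin n // p.1 < p.2}) (hpq : p ≠ q) :
    ∑ s ∈ T i0, col s p * col s q = 0 := by
  obtain ⟨⟨i, j⟩, hij⟩ := p
  obtain ⟨⟨k, l⟩, hkl⟩ := q
  simp only [col]
  have hv : ∀ a b : Fin n, (a : ℕ) ≠ (b : ℕ) → a ≠ b := fun a b h hab => h (by rw [hab])
  have h1 : (i : ℕ) < (j : ℕ) := hij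
  have h2 : (k : ℕ) < (l : ℕ) := hkl
  have hu : ∀ (s : Fin n → Bool) (m r : Fin n), r ≠ m →
      Function.update s m (!s m) r = s r := fun s m r hr => Function.update_of_ne hr _ _
  by_cases hjl : j = l
  · subst hjl
    have hik : i ≠ k := by
      rintro rfl
      exact hpq rfl
    have h3 : (i : ℕ) ≠ (k : ℕ) := fun h => hik (Fin.ext h)
    rcases h3.lt_or_gt with h | h
    · -- i < k : flip bit k
      apply flip_sum i0 k (hv k i0 (by omega))
      intro s
      rw [hu s k i (hv i k (by omega)), hu s k j (hv j k (by omega)),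
        Function.update_self, e_not]
      ring
    · -- k < i : flip bit i
      apply flip_sum i0 i (hv i i0 (by omega))
      intro s
      rw [hu s i j (hv j i (by omega)), hu s i k (hv k i (by omega)),
        Function.update_self, e_not]
      ring
  · have h3 : (j : ℕ) ≠ (l : ℕ) := fun h => hjl (Fin.ext h)
    rcases h3.lt_or_gt with h | h
    · -- j < l : flip bit l
      apply flip_sum i0 l (hv l i0 (by omega))
      intro s
      rw [hu s l i (hv i l (by omega)), hu s l j (hv j l (by omega)),
        hu s l k (hv k l (by omega)), Function.update_self, e_not]
      ring
    · -- l < j : flip bit j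
      apply flip_sum i0 j (hv j i0 (by omega))
      intro s
      rw [hu s j i (hv i j (by omega)), hu s j k (hv k j (by omega)),
        hu s j l (hv l j (by omega)), Function.update_self, e_not]
      ring

end Stmt9Aux

/-- For n ≥ 3, the origin of ℝ^{n(n−1)/2} lies in the interior of the convex hull of the
columns of the ZZ sign matrix M(n) (columns (sᵢsⱼ)_{i<j} for s ∈ {±1}ⁿ with s₁ = 1). -/
theorem stmt_9 (n : ℕ) (hn : 3 ≤ n) :
    (0 : {p : Fin n × Fin n // p.1 < p.2} → ℝ) ∈
      interior (convexHull ℝ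
        {c : {p : Fin n × Fin n // p.1 < p.2} → ℝ |
          ∃ s : Fin n → Bool, s ⟨0, by omega⟩ = true ∧
            c = fun p => (if s p.1.1 then (1 : ℝ) else -1) *
                          (if s p.1.2 then (1 : ℝ) else -1)}) := by
  classical
  have hn0 : 0 < n := by omega
  set ι := {p : Fin n × Fin n // p.1 < p.2}
  set i0 : Fin n := ⟨0, by omega⟩ with hi0def
  have hi0 : (i0 : ℕ) = 0 := rfl
  set S : Set (ι → ℝ) := {c : ι → ℝ |
          ∃ s : Fin n → Bool, s i0 = true ∧
            c = fun p => (if s p.1.1 then (1 : ℝ) else -1) *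
                          (if s p.1.2 then (1 : ℝ) else -1)} with hS
  set N : ℝ := (Fintype.card ι : ℝ) with hN
  have hNnn : (0 : ℝ) ≤ N := Nat.cast_nonneg _
  set r : ℝ := (N + 1)⁻¹ with hr_def
  have hr : 0 < r := by positivity
  -- the ball of radius r is inside the convex hull
  have key : Metric.ball (0 : ι → ℝ) r ⊆ convexHull ℝ S := by
    intro x hx
    have hxa : ∀ p : ι, |x p| ≤ r := by
      intro p
      have h := (dist_pi_lt_iff hr).mp (Metric.mem_ball.mp hx) p
      rw [Real.dist_eq] at h
      simpa using h.le
    have hsum : ∑ q : ι, |x q| ≤ 1 := by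
      calc ∑ q : ι, |x q| ≤ ∑ _q : ι, r := Finset.sum_le_sum fun q _ => hxa q
        _ = N * r := by rw [Finset.sum_const, nsmul_eq_mul]; rfl
        _ ≤ (N + 1) * r := by
            apply mul_le_mul_of_nonneg_right (by linarith) hr.le
        _ = 1 := mul_inv_cancel₀ (by linarith)
    set w : (Fin n → Bool) → ℝ := fun s => 1 + ∑ q : ι, x q * Stmt9Aux.col s q with hw
    have habs1 : ∀ (s : Fin n → Bool) (q : ι), |Stmt9Aux.col s q| = 1 := by
      intro s q
      rw [Stmt9Aux.col, abs_mul, Stmt9Aux.e_abs, Stmt9Aux.e_abs, mul_one]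
    have hw0 : ∀ s, 0 ≤ w s := by
      intro s
      have h1 : |∑ q : ι, x q * Stmt9Aux.col s q| ≤ ∑ q : ι, |x q| := by
        refine (Finset.abs_sum_le_sum_abs _ _).trans ?_
        apply Finset.sum_le_sum
        intro q _
        rw [abs_mul, habs1 s q, mul_one]
      have := (abs_le.mp (h1.trans hsum)).1
      simp only [hw]
      linarith
    have hTne : 0 < ((Stmt9Aux.T i0 : Finset (Fin n → Bool))).card := by
      refine Finset.card_pos.mpr ⟨fun _ => true, ?_⟩
      simp [Stmt9Aux.T]
    have hcard_ne : ((Stmt9Aux.T i0).card : ℝ) ≠ 0 := by positivity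
    have hsw : ∑ s ∈ Stmt9Aux.T i0, w s = ((Stmt9Aux.T i0).card : ℝ) := by
      simp only [hw]
      rw [Finset.sum_add_distrib, Finset.sum_const, nsmul_eq_mul, mul_one, Finset.sum_comm]
      have : ∀ q : ι, ∑ s ∈ Stmt9Aux.T i0, x q * Stmt9Aux.col s q = 0 := by
        intro q
        rw [← Finset.mul_sum, Stmt9Aux.sum_col i0 hi0 q, mul_zero]
      rw [Finset.sum_congr rfl fun q _ => this q]
      simp
    have hcm : ∀ p : ι, ∑ s ∈ Stmt9Aux.T i0, w s * Stmt9Aux.col s p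
        = ((Stmt9Aux.T i0).card : ℝ) * x p := by
      intro p
      have expand : ∀ s, w s * Stmt9Aux.col s p
          = Stmt9Aux.col s p + ∑ q : ι, x q * (Stmt9Aux.col s q * Stmt9Aux.col s p) := by
        intro s
        simp only [hw]
        rw [add_mul, one_mul, Finset.sum_mul]
        congr 1
        exact Finset.sum_congr rfl fun q _ => by ring
      rw [Finset.sum_congr rfl fun s _ => expand s, Finset.sum_add_distrib,
        Stmt9Aux.sum_col i0 hi0 p, Finset.sum_comm, zero_add]
      have hterm : ∀ q : ι, ∑ s ∈ Stmt9Aux.T i0, x q * (Stmt9Aux.col s q * Stmt9Aux.col s p)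
          = if q = p then ((Stmt9Aux.T i0).card : ℝ) * x p else 0 := by
        intro q
        rw [← Finset.mul_sum]
        by_cases hqp : q = p
        · subst hqp
          have : ∀ s, Stmt9Aux.col s q * Stmt9Aux.col s q = 1 := by
            intro s
            rw [Stmt9Aux.col]
            have := Stmt9Aux.e_mul_self (s (q : Fin n × Fin n).1)
            have := Stmt9Aux.e_mul_self (s (q : Fin n × Fin n).2)
            ring_nf
            nlinarith [Stmt9Aux.e_mul_self (s (q : Fin n × Fin n).1),
              Stmt9Aux.e_mul_self (s (q : Fin n × Fin n).2)]
          rw [Finset.sum_congr rfl fun s _ => this s]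
          simp [mul_comm]
        · rw [Stmt9Aux.sum_col_mul i0 hi0 q p hqp, mul_zero, if_neg hqp]
      rw [Finset.sum_congr rfl fun q _ => hterm q, Finset.sum_ite_eq' Finset.univ p
        (fun _ => ((Stmt9Aux.T i0).card : ℝ) * x p)]
      simp
    have hx_eq : (Stmt9Aux.T i0).centerMass w Stmt9Aux.col = x := by
      funext p
      rw [Finset.centerMass, hsw]
      have : (∑ s ∈ Stmt9Aux.T i0, w s • Stmt9Aux.col s) p
          = ∑ s ∈ Stmt9Aux.T i0, w s * Stmt9Aux.col s p := by
        rw [Finset.sum_apply]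
        rfl
      show (((Stmt9Aux.T i0).card : ℝ)⁻¹ • (∑ s ∈ Stmt9Aux.T i0, w s • Stmt9Aux.col s)) p = x p
      rw [Pi.smul_apply, this, hcm p, smul_eq_mul]
      field_simp
    rw [← hx_eq]
    apply Finset.centerMass_mem_convexHull _ (fun s _ => hw0 s)
      (by rw [hsw]; positivity)
    intro s hs
    have hs' : s i0 = true := by
      simpa [Stmt9Aux.T] using hs
    exact ⟨s, hs', rfl⟩
  exact mem_interior.mpr ⟨Metric.ball 0 r, key, Metric.isOpen_ball, Metric.mem_ball_self hr⟩
end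

section
/- For the 2-qubit general two-body case: let M be the 9×16 matrix whose columns, indexed by pairs of single-qubit Pauli conjugations, have entries in {−1,+1} recording the sign flips of the nine couplings σ^μ⊗σ^ν (μ,ν ∈ {x,y,z}) under conjugation by Pauli gates P⊗Q (P,Q ∈ {I,X,Y,Z}); specifically entry ((μ,ν),(P,Q)) = ε(P,μ)·ε(Q,ν) where ε(P,μ)=+1 if P=I or P=σ^μ and −1 otherwise. Then the columns of M span ℝ⁹. -/
/-- Two-qubit general DAQC sign matrix: rows indexed by (μ,ν) ∈ {x,y,z}² (couplings
σ^μ⊗σ^ν), columns indexed by (P,Q) ∈ {I,X,Y,Z}² (Pauli conjugations), with entry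
ε(P,μ)·ε(Q,ν), where ε(P,μ) = +1 if P = I or P = σ^μ and −1 otherwise (Paulis encoded as
Fin 4 with I = 0 and σ^μ = μ+1).  The 16 columns span ℝ⁹. -/
theorem stmt_14 :
    let eps : Fin 4 → Fin 3 → ℝ := fun P μ => if P = 0 ∨ P = μ.succ then 1 else -1
    Submodule.span ℝ
      {c : Fin 3 × Fin 3 → ℝ |
        ∃ PQ : Fin 4 × Fin 4, c = fun μν => eps PQ.1 μν.1 * eps PQ.2 μν.2} = ⊤ := by
  intro eps
  set S : Set (Fin 3 × Fin 3 → ℝ) :=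
    {c : Fin 3 × Fin 3 → ℝ |
        ∃ PQ : Fin 4 × Fin 4, c = fun μν => eps PQ.1 μν.1 * eps PQ.2 μν.2} with hS
  have orth : ∀ a b : Fin 3, ∑ P : Fin 4, eps P a * eps P b = if a = b then 4 else 0 := by
    intro a b
    fin_cases a <;> fin_cases b <;>
      simp (config := { decide := true }) [Fin.sum_univ_four, eps] <;> norm_num
  have hsingle : ∀ i : Fin 3 × Fin 3, Pi.single i (1:ℝ) ∈ Submodule.span ℝ S := by
    intro i
    have key : Pi.single i (1:ℝ) = (16:ℝ)⁻¹ • ∑ PQ : Fin 4 × Fin 4,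
        (eps PQ.1 i.1 * eps PQ.2 i.2) •
          (fun μν : Fin 3 × Fin 3 => eps PQ.1 μν.1 * eps PQ.2 μν.2) := by
      funext μν
      obtain ⟨μ0, ν0⟩ := i
      obtain ⟨μ, ν⟩ := μν
      simp only [Pi.smul_apply, Finset.sum_apply, smul_eq_mul]
      have hfac : ∑ PQ : Fin 4 × Fin 4,
          (eps PQ.1 μ0 * eps PQ.2 ν0) * (eps PQ.1 μ * eps PQ.2 ν)
          = (∑ P : Fin 4, eps P μ0 * eps P μ) * (∑ Q : Fin 4, eps Q ν0 * eps Q ν) := by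
        rw [Finset.sum_mul_sum, Fintype.sum_prod_type]
        exact Finset.sum_congr rfl fun P _ => Finset.sum_congr rfl fun Q _ => by ring
      rw [hfac, orth, orth, Pi.single_apply]
      simp only [Prod.mk.injEq]
      rcases eq_or_ne μ μ0 with rfl | h1
      · rcases eq_or_ne ν ν0 with rfl | h2
        · norm_num
        · simp [h2, Ne.symm h2]
      · simp [h1, Ne.symm h1]
    rw [key]
    exact Submodule.smul_mem _ _ (Submodule.sum_mem _ fun PQ _ =>
      Submodule.smul_mem _ _ (Submodule.subset_span ⟨PQ, rfl⟩))
  rw [eq_top_iff]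
  intro x _
  rw [pi_eq_sum_univ x]
  refine Submodule.sum_mem _ fun i _ => Submodule.smul_mem _ _ ?_
  have : (fun j => if i = j then (1:ℝ) else 0) = Pi.single i 1 := by
    funext j
    rw [Pi.single_apply]
    by_cases h : i = j
    · simp [h]
    · simp [h, Ne.symm h]
  rw [this]; exact hsingle i
end

section
/- With M the 9×16 two-qubit DAQC sign matrix (entries ε(P,μ)ε(Q,ν) as above), let b ∈ ℝ⁹ be the vector with b_{xx} = b_{yy} = b_{zz} = −1 and all other entries 0. Then the minimum of ‖t‖₁ over nonnegative t with M t = b equals 3 = √3‖b‖₂. -/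
/-- For the 9×16 two-qubit DAQC sign matrix with entries ε(P,μ)ε(Q,ν), and the problem
b with b_{xx} = b_{yy} = b_{zz} = −1 and all other entries 0, the minimum of ‖t‖₁ over
nonnegative t with M t = b equals 3 = √3·‖b‖₂. -/
theorem stmt_15 :
    let eps : Fin 4 → Fin 3 → ℝ := fun P μ => if P = 0 ∨ P = μ.succ then 1 else -1
    let b : Fin 3 × Fin 3 → ℝ := fun μν => if μν.1 = μν.2 then -1 else 0
    IsLeast {x : ℝ | ∃ t : Fin 4 × Fin 4 → ℝ,
        (∀ q, 0 ≤ t q) ∧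
        (∀ μν : Fin 3 × Fin 3,
          ∑ q : Fin 4 × Fin 4, t q * (eps q.1 μν.1 * eps q.2 μν.2) = b μν) ∧
        x = ∑ q, |t q|} 3 ∧
    (3 : ℝ) = Real.sqrt 3 * Real.sqrt (∑ μν : Fin 3 × Fin 3, (b μν) ^ 2) := by
  intro eps b
  constructor
  · constructor
    · -- membership: t = 1/4 on off-diagonal pairs
      refine ⟨fun q => if q.1 = q.2 then 0 else 1/4, fun q => by positivity, ?_, ?_⟩
      · intro μν
        obtain ⟨μ, ν⟩ := μν
        fin_cases μ <;> fin_cases ν <;>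
          simp (config := { decide := true }) only [eps, b, Fintype.sum_prod_type, Fin.sum_univ_four] <;> norm_num
      · rw [Fintype.sum_prod_type]
        simp (config := { decide := true }) only [Fin.sum_univ_four]
        norm_num [abs_of_nonneg]
    · -- lower bound via dual certificate y = -I
      rintro x ⟨t, ht0, htA, rfl⟩
      have habs : ∀ q : Fin 4 × Fin 4, |t q| = t q := fun q => abs_of_nonneg (ht0 q)
      simp only [habs]
      have swap : -∑ μ : Fin 3, ∑ q : Fin 4 × Fin 4, t q * (eps q.1 μ * eps q.2 μ)
          = ∑ q : Fin 4 × Fin 4, t q * (-∑ μ : Fin 3, eps q.1 μ * eps q.2 μ) := by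
        rw [Finset.sum_comm, ← Finset.sum_neg_distrib]
        exact Finset.sum_congr rfl fun q _ => by
          rw [mul_neg, Finset.mul_sum]
      have key : (3 : ℝ) = ∑ q : Fin 4 × Fin 4,
          t q * (-∑ μ : Fin 3, eps q.1 μ * eps q.2 μ) := by
        rw [← swap, Fin.sum_univ_three, htA (0, 0), htA (1, 1), htA (2, 2)]
        simp (config := { decide := true }) only [b]
        norm_num
      rw [key]
      refine Finset.sum_le_sum fun q _ => ?_
      have hc : -∑ μ : Fin 3, eps q.1 μ * eps q.2 μ ≤ 1 := by
        obtain ⟨P, Q⟩ := q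
        fin_cases P <;> fin_cases Q <;>
          simp (config := { decide := true }) only [eps, Fin.sum_univ_three] <;> norm_num
      calc t q * (-∑ μ : Fin 3, eps q.1 μ * eps q.2 μ) ≤ t q * 1 :=
            mul_le_mul_of_nonneg_left hc (ht0 q)
        _ = t q := mul_one _
  · have hb : ∑ μν : Fin 3 × Fin 3, (b μν) ^ 2 = 3 := by
      simp (config := { decide := true }) only [b, Fintype.sum_prod_type, Fin.sum_univ_three]
      norm_num
    rw [hb, ← Real.sqrt_mul_self (by norm_num : (0:ℝ) ≤ 3)]
    norm_num
end
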